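/- In a terminating confluent string rewriting system, labelling each rewriting step by its target word, ordered by the transitive closure of the rewriting relation, is a well-founded labelling that makes every local branching strictly decreasing. -/

import Mathlib

/-- One-step rewriting relation of a string rewriting system `R`. -/
def Step {A : Type*} (R : List A → List A → Prop) (u v : List A) : Prop :=
  ∃ l r a b, R a b ∧ u = l ++ a ++ r ∧ v = l ++ b ++ r

/-- Termination: no infinite rewriting sequence. -/
def Terminating {A : Type*} (R : List A → List A → Prop) : Prop :=
  ¬ ∃ f : ℕ → List A, ∀ n, Step R (f n) (f (n + 1))

/-- Confluence. -/
def Confluent {A : Type*} (R : List A → List A → Prop) : Prop :=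
  ∀ u v w, Relation.ReflTransGen (Step R) u v → Relation.ReflTransGen (Step R) u w →
    ∃ x, Relation.ReflTransGen (Step R) v x ∧ Relation.ReflTransGen (Step R) w x

private lemma chain_of_rtg {A : Type*} (R : List A → List A → Prop) :
    ∀ v x : List A, Relation.ReflTransGen (Step R) v x →
      ∃ l : List (List A), List.Chain (Step R) v l ∧
        (v :: l).getLast (by simp) = x ∧
        (∀ z ∈ l, Relation.TransGen (Step R) v z) := by
  intro v x h
  induction h using Relation.ReflTransGen.head_induction_on with
  | refl => exact ⟨[], List.Chain.nil, rfl, by simp⟩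
  | head hstep _ ih =>
    rename_i a b _
    obtain ⟨l, hchain, hlast, hall⟩ := ih
    refine ⟨b :: l, List.Chain.cons hstep hchain, hlast, ?_⟩
    intro z hz
    rcases List.mem_cons.1 hz with rfl | hz'
    · exact Relation.TransGen.single hstep
    · exact Relation.TransGen.head hstep (hall z hz')

theorem target_labelling_strictly_decreasing {A : Type*} (R : List A → List A → Prop)
    (hterm : Terminating R) (hc : Confluent R) :
    WellFounded (fun z v : List A => Relation.TransGen (Step R) v z) ∧
    (∀ u v w, Step R u v → Step R u w →
      ∃ lf lg : List (List A),
        List.Chain (Step R) v lf ∧ List.Chain (Step R) w lg ∧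
        (v :: lf).getLast (by simp) = (w :: lg).getLast (by simp) ∧
        (∀ z ∈ lf, Relation.TransGen (Step R) v z) ∧
        (∀ z ∈ lg, Relation.TransGen (Step R) w z)) := by
  constructor
  · have hwf : WellFounded (fun z v : List A => Step R v z) := by
      constructor
      intro x
      by_contra hx
      have hch : ∀ p : {a : List A // ¬Acc (fun z v : List A => Step R v z) a},
          ∃ q : {a : List A // ¬Acc (fun z v : List A => Step R v z) a}, Step R p.1 q.1 := by
        rintro ⟨a, ha⟩
        obtain ⟨b, hb, hba⟩ := exists_not_acc_lt_of_not_acc ha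
        exact ⟨⟨b, hb⟩, hba⟩
      choose f hf using hch
      refine hterm ⟨fun n => (f^[n] ⟨x, hx⟩).1, fun n => ?_⟩
      simp only [Function.iterate_succ', Function.comp_apply]
      exact hf _
    have h2 := hwf.transGen
    have heq : (fun z v : List A => Relation.TransGen (Step R) v z)
        = Relation.TransGen (fun z v : List A => Step R v z) := by
      funext z v
      exact propext (Relation.transGen_swap (r := Step R) (a := z) (b := v)).symm
    rw [heq]
    exact h2
  · intro u v w hv hw
    obtain ⟨x, hvx, hwx⟩ := hc u v w (Relation.ReflTransGen.single hv)
      (Relation.ReflTransGen.single hw)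
    obtain ⟨lf, hcf, hlf, haf⟩ := chain_of_rtg R v x hvx
    obtain ⟨lg, hcg, hlg, hag⟩ := chain_of_rtg R w x hwx
    exact ⟨lf, lg, hcf, hcg, hlf.trans hlg.symm, haf, hag⟩
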